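/- Let A be an associative Λ-torus over a field k, with Λ finitely generated free abelian. Then every invertible element of A is homogeneous, i.e. lies in some A^λ. -/

import Mathlib

open DirectSum in
set_option maxHeartbeats 1000000 in
set_option synthInstance.maxHeartbeats 200000 in
/-- In an associative `Λ`-torus over a field `k` (`Λ` finitely generated free abelian),
every invertible element is homogeneous, i.e. lies in some `A^λ`. -/
theorem stmt_5 (k : Type) [Field k] (Λ : Type) [AddCommGroup Λ] [DecidableEq Λ]
    [Module.Free ℤ Λ] [Module.Finite ℤ Λ]
    (A : Type) [Ring A] [Algebra k A]
    (𝒜 : Λ → Submodule k A) [GradedAlgebra 𝒜]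
    (htorus : ∀ lam : Λ, ∃ u : Aˣ, (u : A) ∈ 𝒜 lam ∧ 𝒜 lam = Submodule.span k {(u : A)}) :
    ∀ u : Aˣ, ∃ lam : Λ, (u : A) ∈ 𝒜 lam := by
  classical
  intro u
  -- trivial ring case
  by_cases htriv : (1 : A) = 0
  · refine ⟨0, ?_⟩
    have : (u : A) = (u : A) * 1 := by rw [mul_one]
    rw [this, htriv, mul_zero]
    exact (𝒜 0).zero_mem
  haveI : Nontrivial A := ⟨⟨1, 0, htriv⟩⟩
  -- products of nonzero homogeneous elements are nonzero
  have hmulne : ∀ (i j : Λ) (x y : A), x ∈ 𝒜 i → y ∈ 𝒜 j → x ≠ 0 → y ≠ 0 → x * y ≠ 0 := by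
    intro i j x y hx hy hx0 hy0
    obtain ⟨w, -, hspanw⟩ := htorus i
    obtain ⟨w', -, hspanw'⟩ := htorus j
    rw [hspanw, Submodule.mem_span_singleton] at hx
    rw [hspanw', Submodule.mem_span_singleton] at hy
    obtain ⟨c, rfl⟩ := hx
    obtain ⟨d, rfl⟩ := hy
    have hc : c ≠ 0 := by rintro rfl; simp at hx0
    have hd : d ≠ 0 := by rintro rfl; simp at hy0
    rw [smul_mul_smul_comm]
    have hww' : ((w : A) * (w' : A)) ≠ 0 := by
      intro h
      have : (1 : A) = 0 := by
        have := Units.mul_inv (w * w')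
        rw [Units.val_mul] at this
        rw [← this, h, zero_mul]
      exact htriv this
    exact smul_ne_zero (mul_ne_zero hc hd) hww'
  -- an order embedding of Λ into a linearly ordered group
  set ι := Module.Free.ChooseBasisIndex ℤ Λ with hι
  letI : LinearOrder ι := LinearOrder.lift' (Fintype.equivFin ι) (Equiv.injective _)
  let e := (Module.Free.chooseBasis ℤ Λ).repr
  let f : Λ → Lex (ι →₀ ℤ) := fun x => toLex (e x)
  have hfadd : ∀ x y : Λ, f (x + y) = f x + f y := by
    intro x y; simp only [f, map_add]; rfl
  have hfinj : Function.Injective f := fun x y h => e.injective (toLex.injective h)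
  -- decompositions
  let a := DirectSum.decompose 𝒜 (u : A)
  let b := DirectSum.decompose 𝒜 ((u⁻¹ : Aˣ) : A)
  have hu0 : (u : A) ≠ 0 := by
    intro h
    exact htriv (by rw [← u.mul_inv, h, zero_mul])
  have hv0 : ((u⁻¹ : Aˣ) : A) ≠ 0 := by
    intro h
    exact htriv (by rw [← u.inv_mul, h, zero_mul])
  have hSa : a.support.Nonempty := by
    rw [Finset.nonempty_iff_ne_empty]
    intro h
    rw [DFinsupp.support_eq_empty] at h
    apply hu0
    calc (u : A) = (DirectSum.decompose 𝒜).symm a := (Equiv.symm_apply_apply _ _).symm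
    _ = 0 := by rw [h]; simp
  have hSb : b.support.Nonempty := by
    rw [Finset.nonempty_iff_ne_empty]
    intro h
    rw [DFinsupp.support_eq_empty] at h
    apply hv0
    calc ((u⁻¹ : Aˣ) : A) = (DirectSum.decompose 𝒜).symm b := (Equiv.symm_apply_apply _ _).symm
    _ = 0 := by rw [h]; simp
  -- key step: extreme coefficients pair up
  have key : ∀ (G : Type) [AddCommGroup G] [LinearOrder G] [IsOrderedAddMonoid G] (g : Λ → G),
      (∀ x y : Λ, g (x + y) = g x + g y) → Function.Injective g →
      ∀ (lam mu : Λ), lam ∈ a.support → mu ∈ b.support →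
      (∀ i ∈ a.support, g i ≤ g lam) → (∀ j ∈ b.support, g j ≤ g mu) →
      lam + mu = 0 := by
    intro G _ _ _ g hgadd hginj lam mu hlam hmu hmax hmax'
    by_contra hne
    -- the component of u * u⁻¹ at lam + mu is a lam * b mu ≠ 0, but u * u⁻¹ = 1
    have h1 : DirectSum.decompose 𝒜 ((u : A) * ((u⁻¹ : Aˣ) : A)) = a * b :=
      DirectSum.decompose_mul (𝒜 := 𝒜) _ _
    have h2 : ((a * b) (lam + mu) : A) = 0 := by
      rw [← h1]
      rw [u.mul_inv, DirectSum.decompose_one]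
      have : ((1 : ⨁ i, 𝒜 i) (lam + mu) : A) = 0 := by
        show ((DirectSum.of (fun i => 𝒜 i) 0 1) (lam + mu) : A) = 0
        rw [DirectSum.of_eq_of_ne _ _ _ hne]
        rfl
      exact this
    have h3 : ((a * b) (lam + mu) : A) = (a lam : A) * (b mu : A) := by
      rw [DirectSum.coe_mul_apply 𝒜]
      have hfilter : (a.support ×ˢ b.support).filter
          (fun ij : Λ × Λ => ij.1 + ij.2 = lam + mu) = {(lam, mu)} := by
        ext ⟨i, j⟩
        simp only [Finset.mem_filter, Finset.mem_product, Finset.mem_singleton, Prod.mk.injEq]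
        constructor
        · rintro ⟨⟨hi, hj⟩, hij⟩
          have hfi : g i ≤ g lam := hmax i hi
          have hfj : g j ≤ g mu := hmax' j hj
          have hfij : g i + g j = g lam + g mu := by
            rw [← hgadd, ← hgadd, hij]
          have h4 : g i = g lam := by
            by_contra h
            have : g i + g j < g lam + g mu :=
              add_lt_add_of_lt_of_le (lt_of_le_of_ne hfi h) hfj
            exact absurd hfij (ne_of_lt this)
          have h5 : g j = g mu := by
            have := hfij
            rw [h4] at this
            exact add_left_cancel this
          exact ⟨hginj h4, hginj h5⟩
        · rintro ⟨rfl, rfl⟩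
          exact ⟨⟨hlam, hmu⟩, rfl⟩
      rw [hfilter, Finset.sum_singleton]
    have ha0 : (a lam : A) ≠ 0 := by
      rw [DFinsupp.mem_support_iff] at hlam
      simpa [ZeroMemClass.coe_eq_zero] using hlam
    have hb0 : (b mu : A) ≠ 0 := by
      rw [DFinsupp.mem_support_iff] at hmu
      simpa [ZeroMemClass.coe_eq_zero] using hmu
    exact hmulne lam mu _ _ (a lam).2 (b mu).2 ha0 hb0 (h3 ▸ h2)
  -- extract max and min of the supports
  obtain ⟨l₁, hl₁, hl₁max⟩ := a.support.exists_max_image f hSa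
  obtain ⟨l₀, hl₀, hl₀min⟩ := a.support.exists_min_image f hSa
  obtain ⟨m₁, hm₁, hm₁max⟩ := b.support.exists_max_image f hSb
  obtain ⟨m₀, hm₀, hm₀min⟩ := b.support.exists_min_image f hSb
  have htop : l₁ + m₁ = 0 := key _ f hfadd hfinj l₁ m₁ hl₁ hm₁ hl₁max hm₁max
  have hbot : l₀ + m₀ = 0 :=
    key (Lex (ι →₀ ℤ))ᵒᵈ (fun x => OrderDual.toDual (f x))
      (fun x y => congrArg OrderDual.toDual (hfadd x y))
      (fun x y h => hfinj (OrderDual.toDual.injective h))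
      l₀ m₀ hl₀ hm₀ (fun i hi => hl₀min i hi) (fun j hj => hm₀min j hj)
  -- conclude l₀ = l₁, so the support of a is a singleton
  have hll : l₀ = l₁ := by
    apply hfinj
    have h6 : f l₀ + f m₀ = f l₁ + f m₁ := by
      rw [← hfadd, ← hfadd, htop, hbot]
    by_contra h
    have : f l₀ + f m₀ < f l₁ + f m₁ :=
      add_lt_add_of_lt_of_le (lt_of_le_of_ne (hl₁max l₀ hl₀) h) (hm₁max m₀ hm₀)
    exact absurd h6 (ne_of_lt this)
  have hsupp : ∀ i ∈ a.support, i = l₀ := by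
    intro i hi
    apply hfinj
    exact le_antisymm (hll ▸ hl₁max i hi) (hl₀min i hi)
  refine ⟨l₀, ?_⟩
  have ha : a = DirectSum.of (fun i => 𝒜 i) l₀ (a l₀) := by
    apply DFinsupp.ext
    intro i
    by_cases h : i = l₀
    · subst h; rw [DirectSum.of_eq_same]
    · rw [DirectSum.of_eq_of_ne _ _ _ h]
      by_contra h'
      exact h (hsupp i (DFinsupp.mem_support_iff.2 h'))
  have : (u : A) = (a l₀ : A) := by
    have h7 : (DirectSum.decompose 𝒜).symm a = (u : A) := Equiv.symm_apply_apply _ _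
    rw [← h7, ha, DirectSum.decompose_symm_of, DirectSum.of_eq_same]
  rw [this]
  exact (a l₀).2
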